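/- The set K⁺ = K ∪ ⋃_{d ∈ D} F(d) is a closed subset of ℝ². -/

import Mathlib

open Set Topology

/-- The Cantor space `2^ℕ`, with coordinates indexed by the positive integers. -/
abbrev Cant : Type := ℕ+ → Bool

/-- The support of a point of the Cantor space, as a set of (positive) natural numbers. -/
def ksupp (x : Cant) : Set ℕ := {i | ∃ h : 0 < i, x ⟨i, h⟩ = true}

/-- The plane. -/
abbrev Plane : Type := EuclideanSpace ℝ (Fin 2)

/-- `N_d = max supp d` (with `sSup ∅ = 0` for the zero point). -/
noncomputable def Nd (d : Cant) : ℕ := sSup (ksupp d)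

/-- The basic clopen set `V_d = {y : y(i) = d(i) for 1 ≤ i ≤ N_d}`. -/
noncomputable def Vd (d : Cant) : Set Cant :=
  {y | ∀ i : ℕ+, (i : ℕ) ≤ Nd d → y i = d i}

/-- The set `D_d` of children of `d ∈ D`: the points of `D_{k_d+1}` agreeing with `d`
on the coordinates `1, …, N_d`. -/
noncomputable def Dch (d : Cant) : Set Cant :=
  {e | (ksupp e).Finite ∧ (ksupp e).ncard = (ksupp d).ncard + 1 ∧
    ∀ i : ℕ+, (i : ℕ) ≤ Nd d → e i = d i}

/-- The ball `W(d) = B(σ(d), 2^{−ℓ(d)})`. -/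
noncomputable def Wb (σ : Cant → Plane) (ℓ : Cant → ℕ) (d : Cant) : Set Plane :=
  Metric.ball (σ d) ((2 : ℝ) ^ (-(ℓ d : ℤ)))

/-- The ball `U(d) = B(σ(d), 2^{−ℓ(d)−1})`. -/
noncomputable def Ub (σ : Cant → Plane) (ℓ : Cant → ℕ) (d : Cant) : Set Plane :=
  Metric.ball (σ d) ((2 : ℝ) ^ (-(ℓ d : ℤ) - 1))

/-- The resulting Cantor set `K = ⋂_n cl (⋃ {W(d) : d ∈ D_n})`. -/
noncomputable def Kset (σ : Cant → Plane) (ℓ : Cant → ℕ) : Set Plane :=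
  ⋂ n : ℕ, closure (⋃ d ∈ {d : Cant | (ksupp d).Finite ∧ (ksupp d).ncard = n}, Wb σ ℓ d)

/-- The closed set `F(d) = cl U(d) \ ⋃_{e ∈ D_d} W(e)`. -/
noncomputable def Fd (σ : Cant → Plane) (ℓ : Cant → ℕ) (d : Cant) : Set Plane :=
  closure (Ub σ ℓ d) \ ⋃ e ∈ Dch d, Wb σ ℓ e

/-- The three conditions imposed on the maps `σ : D → ℝ²` and `ℓ : D → ω`:
(1) `⟨σ(e) : e ∈ D_d⟩` converges to `σ(d)` (in the sense that `σ(e)` is close to `σ(d)`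
    once the added support element `N_e` of the child `e` is large);
(2) `cl W(e) ⊆ U(d) \ {σ(d)}` whenever `e ∈ D_d`;
(3) `{cl W(d) : d ∈ D_n}` is pairwise disjoint for every `n`. -/
def CantorConds (σ : Cant → Plane) (ℓ : Cant → ℕ) : Prop :=
  (∀ d : Cant, (ksupp d).Finite → ∀ ε > (0 : ℝ), ∃ M : ℕ, ∀ e ∈ Dch d,
      M ≤ Nd e → dist (σ e) (σ d) < ε) ∧
  (∀ d : Cant, (ksupp d).Finite → ∀ e ∈ Dch d,
      closure (Wb σ ℓ e) ⊆ Ub σ ℓ d \ {σ d}) ∧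
  (∀ n : ℕ, ∀ d e : Cant, (ksupp d).Finite → (ksupp d).ncard = n →
      (ksupp e).Finite → (ksupp e).ncard = n → d ≠ e →
      Disjoint (closure (Wb σ ℓ d)) (closure (Wb σ ℓ e)))
section KPaux

open Metric

variable (σ : Cant → Plane) (ℓ : Cant → ℕ)

lemma KP_rpos (z : ℤ) : (0:ℝ) < 2 ^ z := by positivity

lemma KP_closure_Wb (d : Cant) :
    closure (Wb σ ℓ d) = closedBall (σ d) ((2:ℝ) ^ (-(ℓ d : ℤ))) :=
  closure_ball _ (ne_of_gt (KP_rpos _))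

lemma KP_Ub_eq (d : Cant) :
    Ub σ ℓ d = ball (σ d) ((2:ℝ) ^ (-(ℓ d : ℤ)) / 2) := by
  unfold Ub
  rw [sub_eq_add_neg, zpow_add₀ (by norm_num : (2:ℝ) ≠ 0)]
  norm_num
  ring_nf

lemma KP_Ub_subset_Wb (d : Cant) : Ub σ ℓ d ⊆ Wb σ ℓ d := by
  rw [KP_Ub_eq]
  apply ball_subset_ball
  have := KP_rpos (-(ℓ d : ℤ))
  linarith

lemma KP_le_Nd {x : Cant} (hx : (ksupp x).Finite) {i : ℕ} (h : i ∈ ksupp x) : i ≤ Nd x :=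
  le_csSup hx.bddAbove h

lemma KP_Nd_mem {x : Cant} (hx : (ksupp x).Finite) (hne : (ksupp x).Nonempty) :
    Nd x ∈ ksupp x := hne.csSup_mem hx

lemma KP_Nd_eq {x : Cant} (hx : (ksupp x).Finite) {n : ℕ} (hmem : n ∈ ksupp x)
    (hub : ∀ i ∈ ksupp x, i ≤ n) : Nd x = n :=
  le_antisymm (csSup_le ⟨n, hmem⟩ hub) (KP_le_Nd hx hmem)

lemma KP_mem_ksupp_coe {x : Cant} (i : ℕ+) : (i:ℕ) ∈ ksupp x ↔ x i = true := by
  constructor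
  · rintro ⟨h, hx⟩; exact hx
  · intro h; exact ⟨i.2, h⟩

lemma KP_child_spec {d e : Cant} (hd : (ksupp d).Finite) (he : e ∈ Dch d) :
    (ksupp e).Finite ∧ Nd d < Nd e ∧ ksupp e = insert (Nd e) (ksupp d) := by
  obtain ⟨hef, hec, hagree⟩ := he
  have hsub : ksupp d ⊆ ksupp e := by
    rintro i ⟨hip, hdi⟩
    have hle : i ≤ Nd d := KP_le_Nd hd ⟨hip, hdi⟩
    exact ⟨hip, by rw [hagree ⟨i, hip⟩ hle]; exact hdi⟩
  have hgt : ∀ i ∈ ksupp e \ ksupp d, Nd d < i := by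
    rintro i ⟨⟨hip, hei⟩, hnd⟩
    by_contra hle
    push_neg at hle
    exact hnd ⟨hip, by rw [← hagree ⟨i, hip⟩ hle]; exact hei⟩
  have hdiffcard : (ksupp e \ ksupp d).ncard = 1 := by
    rw [Set.ncard_diff hsub hd, hec]
    omega
  obtain ⟨n, hn⟩ := Set.ncard_eq_one.mp hdiffcard
  have hesupp : ksupp e = insert n (ksupp d) := by
    rw [← Set.diff_union_of_subset hsub, hn, Set.singleton_union]
  have hnn : n ∈ ksupp e \ ksupp d := by rw [hn]; exact rfl
  have hNd : Nd e = n := by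
    refine KP_Nd_eq hef hnn.1 ?_
    intro i hi
    rw [hesupp] at hi
    rcases hi with rfl | hi
    · exact le_refl _
    · exact le_of_lt (lt_of_le_of_lt (KP_le_Nd hd hi) (hgt n hnn))
  refine ⟨hef, ?_, ?_⟩
  · rw [hNd]; exact hgt n hnn
  · rw [hNd]; exact hesupp

lemma KP_child_inj {d e1 e2 : Cant} (hd : (ksupp d).Finite) (h1 : e1 ∈ Dch d)
    (h2 : e2 ∈ Dch d) (hN : Nd e1 = Nd e2) : e1 = e2 := by
  obtain ⟨hf1, hlt1, hs1⟩ := KP_child_spec hd h1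
  obtain ⟨hf2, hlt2, hs2⟩ := KP_child_spec hd h2
  have hsupp : ksupp e1 = ksupp e2 := by rw [hs1, hs2, hN]
  funext i
  have h1' := KP_mem_ksupp_coe (x := e1) i
  have h2' := KP_mem_ksupp_coe (x := e2) i
  rw [hsupp] at h1'
  cases hb1 : e1 i <;> cases hb2 : e2 i <;> simp_all

lemma KP_child_exists {d : Cant} (hd : (ksupp d).Finite) {n : ℕ} (h1 : Nd d < n)
    (h0 : 0 < n) : ∃ e ∈ Dch d, Nd e = n := by
  have hnot : n ∉ ksupp d := fun hn => absurd (KP_le_Nd hd hn) (by omega)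
  set e : Cant := fun i => if (i:ℕ) = n then true else d i with hedef
  have hsupp : ksupp e = insert n (ksupp d) := by
    ext i
    constructor
    · rintro ⟨hip, hi⟩
      by_cases hin : i = n
      · exact Or.inl hin
      · right
        refine ⟨hip, ?_⟩
        simpa [hedef, hin] using hi
    · rintro (rfl | ⟨hip, hi⟩)
      · exact ⟨h0, by simp [hedef]⟩
      · refine ⟨hip, ?_⟩
        by_cases hin : i = n
        · simp [hedef, hin]
        · simpa [hedef, hin] using hi
  have hNe : Nd e = n := by
    refine KP_Nd_eq (by rw [hsupp]; exact hd.insert n) ?_ ?_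
    · rw [hsupp]; exact Set.mem_insert _ _
    · intro i hi
      rw [hsupp] at hi
      rcases hi with rfl | hi
      · exact le_refl _
      · exact le_of_lt (lt_of_le_of_lt (KP_le_Nd hd hi) h1)
  refine ⟨e, ⟨?_, ?_, ?_⟩, hNe⟩
  · rw [hsupp]; exact hd.insert n
  · rw [hsupp, Set.ncard_insert_of_notMem hnot hd]
  · intro i hi
    have : (i:ℕ) ≠ n := by omega
    simp [hedef, this]

lemma KP_parent_exists {d : Cant} (hd : (ksupp d).Finite) (hne : (ksupp d).ncard ≠ 0) :
    ∃ p : Cant, (ksupp p).Finite ∧ (ksupp p).ncard + 1 = (ksupp d).ncard ∧ d ∈ Dch p := by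
  have hnonempty : (ksupp d).Nonempty := Set.nonempty_of_ncard_ne_zero hne
  have hmem : Nd d ∈ ksupp d := KP_Nd_mem hd hnonempty
  obtain ⟨hnp, -⟩ := hmem
  set n := Nd d with hn
  have hmem' : n ∈ ksupp d := KP_Nd_mem hd hnonempty
  set p : Cant := fun i => if (i:ℕ) = n then false else d i with hpdef
  have hsupp : ksupp p = ksupp d \ {n} := by
    ext i
    constructor
    · rintro ⟨hip, hi⟩
      by_cases hin : i = n
      · simp [hpdef, hin] at hi
      · exact ⟨⟨hip, by simpa [hpdef, hin] using hi⟩, hin⟩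
    · rintro ⟨⟨hip, hi⟩, hin⟩
      have hin' : i ≠ n := hin
      exact ⟨hip, by simpa [hpdef, hin'] using hi⟩
  have hpf : (ksupp p).Finite := by rw [hsupp]; exact hd.diff
  have hplt : ∀ i ∈ ksupp p, i < n := by
    intro i hi
    rw [hsupp] at hi
    exact lt_of_le_of_ne (KP_le_Nd hd hi.1) hi.2
  have hNp : Nd p < n := by
    rcases Set.eq_empty_or_nonempty (ksupp p) with h | h
    · have : Nd p = 0 := by rw [Nd, h]; exact csSup_empty
      omega
    · exact hplt _ (KP_Nd_mem hpf h)
  refine ⟨p, hpf, ?_, hd, ?_, ?_⟩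
  · rw [hsupp, Set.ncard_diff_singleton_of_mem hmem']
    omega
  · rw [hsupp, Set.ncard_diff_singleton_of_mem hmem']
    omega
  · intro i hi
    have : (i:ℕ) ≠ n := by omega
    simp [hpdef, this]

end KPaux
section KPaux2

open Metric

variable (σ : Cant → Plane) (ℓ : Cant → ℕ)

lemma KP_cB_child (hc : CantorConds σ ℓ) {d e : Cant} (hd : (ksupp d).Finite)
    (he : e ∈ Dch d) :
    closure (Wb σ ℓ e) ⊆ Ub σ ℓ d ∧ σ d ∉ closure (Wb σ ℓ e) ∧
      closure (Wb σ ℓ e) ⊆ closure (Wb σ ℓ d) := by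
  have h := hc.2.1 d hd e he
  refine ⟨fun y hy => (h hy).1, fun hy => (h hy).2 rfl, fun y hy => ?_⟩
  exact subset_closure (KP_Ub_subset_Wb σ ℓ d (h hy).1)

/-- The level-`n` approximation `A_n`. -/
noncomputable def An (n : ℕ) : Set Plane :=
  closure (⋃ d ∈ {d : Cant | (ksupp d).Finite ∧ (ksupp d).ncard = n}, Wb σ ℓ d)

lemma KP_K_eq : Kset σ ℓ = ⋂ n, An σ ℓ n := rfl

lemma KP_An_closed (n : ℕ) : IsClosed (An σ ℓ n) := isClosed_closure

lemma KP_K_closed : IsClosed (Kset σ ℓ) := by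
  rw [KP_K_eq]; exact isClosed_iInter fun _ => isClosed_closure

lemma KP_K_subset_An (n : ℕ) : Kset σ ℓ ⊆ An σ ℓ n := by
  rw [KP_K_eq]; exact iInter_subset _ n

lemma KP_cB_subset_An {d : Cant} (hd : (ksupp d).Finite) :
    closure (Wb σ ℓ d) ⊆ An σ ℓ (ksupp d).ncard :=
  closure_mono (subset_biUnion_of_mem (show d ∈ {d : Cant | (ksupp d).Finite ∧
    (ksupp d).ncard = (ksupp d).ncard} from ⟨hd, rfl⟩))

lemma KP_exists_anc (hc : CantorConds σ ℓ) :
    ∀ (k j : ℕ), j ≤ k → ∀ d : Cant, (ksupp d).Finite → (ksupp d).ncard = k →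
    ∃ a : Cant, (ksupp a).Finite ∧ (ksupp a).ncard = j ∧
      closure (Wb σ ℓ d) ⊆ closure (Wb σ ℓ a) ∧
      (j < k → ∃ e ∈ Dch a, Wb σ ℓ d ⊆ Wb σ ℓ e) := by
  intro k
  induction k with
  | zero =>
    intro j hj d hdf hdc
    exact ⟨d, hdf, by omega, subset_rfl, by omega⟩
  | succ k IH =>
    intro j hj d hdf hdc
    rcases eq_or_lt_of_le hj with rfl | hjk
    · exact ⟨d, hdf, hdc, subset_rfl, by omega⟩
    · have hjk' : j ≤ k := by omega
      obtain ⟨p, hpf, hpc, hdp⟩ := KP_parent_exists hdf (by omega)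
      have hpk : (ksupp p).ncard = k := by omega
      have hcb := KP_cB_child σ ℓ hc hpf hdp
      rcases eq_or_lt_of_le hjk' with rfl | hjk2
      · exact ⟨p, hpf, hpk, hcb.2.2, fun _ => ⟨d, hdp, subset_rfl⟩⟩
      · obtain ⟨a, haf, hac, hsub, hlt⟩ := IH j hjk' p hpf hpk
        obtain ⟨e, heD, hWe⟩ := hlt hjk2
        refine ⟨a, haf, hac, hcb.2.2.trans hsub, fun _ => ⟨e, heD, ?_⟩⟩
        exact (subset_closure.trans (hcb.1.trans (KP_Ub_subset_Wb σ ℓ p))).trans hWe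

lemma KP_cB_subset_An_le (hc : CantorConds σ ℓ) {d : Cant} (hd : (ksupp d).Finite)
    {j : ℕ} (hj : j ≤ (ksupp d).ncard) : closure (Wb σ ℓ d) ⊆ An σ ℓ j := by
  obtain ⟨a, haf, hac, hsub, -⟩ := KP_exists_anc σ ℓ hc (ksupp d).ncard j hj d hd rfl
  exact hsub.trans (hac ▸ KP_cB_subset_An σ ℓ haf)

lemma KP_sigma_mem_self (d : Cant) : σ d ∈ Wb σ ℓ d := mem_ball_self (KP_rpos _)

lemma KP_sigma_mem_An_add (hc : CantorConds σ ℓ) :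
    ∀ (t : ℕ) (d : Cant), (ksupp d).Finite → σ d ∈ An σ ℓ ((ksupp d).ncard + t) := by
  intro t
  induction t with
  | zero =>
    intro d hdf
    have h0 : (ksupp d).ncard + 0 = (ksupp d).ncard := by omega
    rw [h0]
    exact KP_cB_subset_An σ ℓ hdf (subset_closure (KP_sigma_mem_self σ ℓ d))
  | succ t IH =>
    intro d hdf
    have hcl : σ d ∈ closure (An σ ℓ ((ksupp d).ncard + (t+1))) := by
      rw [Metric.mem_closure_iff]
      intro ε hε
      obtain ⟨M, hM⟩ := hc.1 d hdf ε hε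
      obtain ⟨e, heD, heN⟩ := KP_child_exists hdf (n := max M (Nd d + 1))
        (by omega) (by omega)
      refine ⟨σ e, ?_, by rw [dist_comm]; exact hM e heD (by omega)⟩
      have harr : (ksupp d).ncard + (t+1) = (ksupp e).ncard + t := by
        rw [heD.2.1]; omega
      rw [harr]
      exact IH e heD.1
    rwa [IsClosed.closure_eq (KP_An_closed σ ℓ _)] at hcl

lemma KP_sigma_mem_An (hc : CantorConds σ ℓ) (j : ℕ) (d : Cant)
    (hdf : (ksupp d).Finite) : σ d ∈ An σ ℓ j := by
  rcases le_or_gt j (ksupp d).ncard with h | h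
  · exact KP_cB_subset_An_le σ ℓ hc hdf h (subset_closure (KP_sigma_mem_self σ ℓ d))
  · have := KP_sigma_mem_An_add σ ℓ hc (j - (ksupp d).ncard) d hdf
    rwa [Nat.add_sub_cancel' h.le] at this

lemma KP_sigma_mem_K (hc : CantorConds σ ℓ) (d : Cant) (hdf : (ksupp d).Finite) :
    σ d ∈ Kset σ ℓ := by
  rw [KP_K_eq]
  exact mem_iInter.2 fun j => KP_sigma_mem_An σ ℓ hc j d hdf

lemma KP_dist_of_disjoint {d e : Cant}
    (h : Disjoint (closure (Wb σ ℓ d)) (closure (Wb σ ℓ e))) :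
    (2:ℝ)^(-(ℓ d:ℤ)) + 2^(-(ℓ e:ℤ)) < dist (σ d) (σ e) := by
  rw [KP_closure_Wb, KP_closure_Wb] at h
  exact (disjoint_closedBall_closedBall_iff (KP_rpos _).le (KP_rpos _).le).mp h

end KPaux2
section KPaux3

open Metric

variable (σ : Cant → Plane) (ℓ : Cant → ℕ)

lemma KP_clos (hc : CantorConds σ ℓ) :
    ∀ (j : ℕ) (S : Set Cant), (∀ d ∈ S, (ksupp d).Finite ∧ (ksupp d).ncard = j) →
      closure (⋃ d ∈ S, closure (Wb σ ℓ d)) ⊆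
        (⋃ d ∈ S, closure (Wb σ ℓ d)) ∪ Kset σ ℓ := by
  intro j
  induction j with
  | zero =>
    intro S hS
    have hsub : S.Subsingleton := by
      intro a ha b hb
      have ha' : ksupp a = ∅ := by
        rw [← Set.ncard_eq_zero (hS a ha).1]; exact (hS a ha).2
      have hb' : ksupp b = ∅ := by
        rw [← Set.ncard_eq_zero (hS b hb).1]; exact (hS b hb).2
      funext i
      have h1 := KP_mem_ksupp_coe (x := a) i
      have h2 := KP_mem_ksupp_coe (x := b) i
      rw [ha'] at h1
      rw [hb'] at h2
      cases hb1 : a i <;> cases hb2 : b i <;> simp_all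
    rcases hsub.eq_empty_or_singleton with rfl | ⟨a, rfl⟩
    · simp
    · rw [biUnion_singleton, closure_closure]
      exact fun x hx => Or.inl hx
  | succ j IH =>
    intro S hS x hx
    by_cases hxK : x ∈ Kset σ ℓ
    · exact Or.inr hxK
    left
    set P : Set Cant := {p | (ksupp p).Finite ∧ (ksupp p).ncard = j ∧ ∃ d' ∈ S, d' ∈ Dch p}
      with hPdef
    have hPspec : ∀ p ∈ P, (ksupp p).Finite ∧ (ksupp p).ncard = j := fun p hp => ⟨hp.1, hp.2.1⟩
    have hSP : (⋃ d ∈ S, closure (Wb σ ℓ d)) ⊆ ⋃ p ∈ P, closure (Wb σ ℓ p) := by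
      intro y hy
      obtain ⟨d', hd'S, hyd⟩ := mem_iUnion₂.mp hy
      obtain ⟨hd'f, hd'c⟩ := hS d' hd'S
      obtain ⟨p, hpf, hpc, hdp⟩ := KP_parent_exists hd'f (by omega)
      have hpP : p ∈ P := ⟨hpf, by omega, d', hd'S, hdp⟩
      exact mem_iUnion₂.mpr ⟨p, hpP, (KP_cB_child σ ℓ hc hpf hdp).2.2 hyd⟩
    have hxP : x ∈ ⋃ p ∈ P, closure (Wb σ ℓ p) := by
      rcases IH P hPspec (closure_mono hSP hx) with h | h
      · exact h
      · exact absurd h hxK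
    obtain ⟨p, hpP, hxp⟩ := mem_iUnion₂.mp hxP
    obtain ⟨hpf, hpc, -⟩ := hpP
    obtain ⟨ε0, hε0, hball⟩ := Metric.isOpen_iff.mp (KP_K_closed σ ℓ).isOpen_compl x hxK
    have hσfar : ∀ q : Cant, (ksupp q).Finite → ε0 ≤ dist x (σ q) := by
      intro q hq
      by_contra h
      push_neg at h
      exact hball (by rw [mem_ball, dist_comm]; exact h) (KP_sigma_mem_K σ ℓ hc q hq)
    obtain ⟨M, hM⟩ := hc.1 p hpf (ε0/4) (by linarith)
    set S' : Set Cant := {d' ∈ S | d' ∈ Dch p ∧ Nd d' < M} with hS'def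
    have hfar : (⋃ d' ∈ S, closure (Wb σ ℓ d')) ⊆
        (⋃ d' ∈ S', closure (Wb σ ℓ d')) ∪ (Metric.ball x (ε0/2))ᶜ := by
      intro y hy
      obtain ⟨d', hd'S, hyd⟩ := mem_iUnion₂.mp hy
      obtain ⟨hd'f, hd'c⟩ := hS d' hd'S
      obtain ⟨q, hqf, hqc, hd'q⟩ := KP_parent_exists hd'f (by omega)
      have hqj : (ksupp q).ncard = j := by omega
      by_cases hqp : q = p
      · subst hqp
        by_cases hNM : Nd d' < M
        · exact Or.inl (mem_iUnion₂.mpr ⟨d', ⟨hd'S, hd'q, hNM⟩, hyd⟩)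
        · right
          have hd1 : dist (σ d') (σ q) < ε0/4 := hM d' hd'q (by omega)
          have hr : (2:ℝ)^(-(ℓ d':ℤ)) < dist (σ d') (σ q) := by
            have hnot := (KP_cB_child σ ℓ hc hqf hd'q).2.1
            rw [KP_closure_Wb, Metric.mem_closedBall, dist_comm] at hnot
            linarith [not_le.mp hnot]
          have hy1 : dist y (σ d') ≤ 2^(-(ℓ d':ℤ)) := by
            rw [KP_closure_Wb, Metric.mem_closedBall] at hyd; exact hyd
          have hx1 : ε0 ≤ dist x (σ q) := hσfar q hqf
          have tri : dist x (σ q) ≤ dist x y + dist y (σ d') + dist (σ d') (σ q) :=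
            dist_triangle4 x y (σ d') (σ q)
          intro hmem
          rw [mem_ball, dist_comm] at hmem
          linarith
      · right
        have hdisj := hc.2.2 j q p hqf hqj hpf hpc hqp
        have hqd := KP_dist_of_disjoint σ ℓ hdisj
        have hyU : y ∈ Ub σ ℓ q := (KP_cB_child σ ℓ hc hqf hd'q).1 hyd
        rw [KP_Ub_eq, mem_ball] at hyU
        have hxp' : dist x (σ p) ≤ 2^(-(ℓ p:ℤ)) := by
          rw [KP_closure_Wb, Metric.mem_closedBall] at hxp; exact hxp
        have hxq : ε0 ≤ dist x (σ q) := hσfar q hqf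
        have tri1 : dist (σ q) (σ p) ≤ dist (σ q) x + dist x (σ p) := dist_triangle _ _ _
        have tri2 : dist x (σ q) ≤ dist x y + dist y (σ q) := dist_triangle _ _ _
        intro hmem
        rw [mem_ball, dist_comm] at hmem
        rw [dist_comm (σ q) x] at tri1
        rcases le_or_gt ((2:ℝ)^(-(ℓ q:ℤ))) ε0 with h | h
        · linarith
        · linarith
    have hxcl := closure_mono hfar hx
    rw [closure_union] at hxcl
    have hS'fin : S'.Finite := by
      have hinj : Set.InjOn Nd S' := fun a ha b hb hab =>
        KP_child_inj hpf ha.2.1 hb.2.1 hab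
      have him : Nd '' S' ⊆ Set.Iio M := by
        rintro _ ⟨a, ha, rfl⟩; exact ha.2.2
      exact Set.Finite.of_finite_image ((Set.finite_Iio M).subset him) hinj
    have hclosed : IsClosed (⋃ d' ∈ S', closure (Wb σ ℓ d')) :=
      hS'fin.isClosed_biUnion fun _ _ => isClosed_closure
    rcases hxcl with h | h
    · rw [hclosed.closure_eq] at h
      obtain ⟨d', hd'S', hxd'⟩ := mem_iUnion₂.mp h
      exact mem_iUnion₂.mpr ⟨d', hd'S'.1, hxd'⟩
    · rw [IsClosed.closure_eq (isClosed_compl_iff.mpr Metric.isOpen_ball)] at h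
      exact absurd (Metric.mem_ball_self (by linarith)) h
end KPaux3
lemma KP_Wb_open (σ : Cant → Plane) (ℓ : Cant → ℕ) (d : Cant) : IsOpen (Wb σ ℓ d) := by
  unfold Wb; exact Metric.isOpen_ball

/-- The set `K⁺ = K ∪ ⋃_{d ∈ D} F(d)` is a closed subset of the plane. -/
theorem Kplus_isClosed (σ : Cant → Plane) (ℓ : Cant → ℕ)
    (hc : CantorConds σ ℓ) :
    IsClosed (Kset σ ℓ ∪ ⋃ d ∈ {d : Cant | (ksupp d).Finite}, Fd σ ℓ d) := by
  rw [← isOpen_compl_iff, isOpen_iff_forall_mem_open]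
  intro x hx
  have hxK : x ∉ Kset σ ℓ := fun h => hx (Or.inl h)
  have hxF : ∀ d : Cant, (ksupp d).Finite → x ∉ Fd σ ℓ d := fun d hd h =>
    hx (Or.inr (mem_iUnion₂.mpr ⟨d, hd, h⟩))
  have hFsub : ∀ d' : Cant, Fd σ ℓ d' ⊆ closure (Wb σ ℓ d') := fun d' y hy =>
    closure_mono (KP_Ub_subset_Wb σ ℓ d') hy.1
  classical
  have hexists : ∃ n, x ∉ An σ ℓ n := by
    by_contra h
    push_neg at h
    exact hxK (by rw [KP_K_eq]; exact mem_iInter.2 h)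
  obtain ⟨n0, hnotin, hmin⟩ : ∃ n0, x ∉ An σ ℓ n0 ∧ ∀ m, m < n0 → x ∈ An σ ℓ m :=
    ⟨Nat.find hexists, Nat.find_spec hexists,
      fun m hm => not_not.mp (Nat.find_min hexists hm)⟩
  rcases n0 with _ | m
  · -- `x` is not even close to the root ball
    refine ⟨(An σ ℓ 0)ᶜ, ?_, (KP_An_closed σ ℓ 0).isOpen_compl, hnotin⟩
    intro y hy hmem
    rcases hmem with hyK | hyF
    · exact hy (KP_K_subset_An σ ℓ 0 hyK)
    · obtain ⟨d', hd'f, hyFd⟩ := mem_iUnion₂.mp hyF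
      exact hy (KP_cB_subset_An_le σ ℓ hc hd'f (Nat.zero_le _) (hFsub d' hyFd))
  · have hxm : x ∈ An σ ℓ m := hmin m (Nat.lt_succ_self m)
    -- locate `x` in a unique closed ball at level `m`
    have hxA : x ∈ ⋃ d ∈ {d : Cant | (ksupp d).Finite ∧ (ksupp d).ncard = m},
        closure (Wb σ ℓ d) := by
      have h1 : An σ ℓ m ⊆ closure (⋃ d ∈ {d : Cant | (ksupp d).Finite ∧
          (ksupp d).ncard = m}, closure (Wb σ ℓ d)) :=
        closure_mono (iUnion₂_mono fun d _ => subset_closure)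
      rcases KP_clos σ ℓ hc m _ (fun d hd => hd) (h1 hxm) with h | h
      · exact h
      · exact absurd h hxK
    obtain ⟨d, ⟨hdf, hdm⟩, hxd⟩ := mem_iUnion₂.mp hxA
    have hchA : ∀ e ∈ Dch d, Wb σ ℓ e ⊆ An σ ℓ (m+1) := by
      intro e he
      have hec : (ksupp e).ncard = m + 1 := by rw [he.2.1, hdm]
      have h2 := KP_cB_subset_An σ ℓ he.1
      rw [hec] at h2
      exact subset_closure.trans h2
    have hxU : x ∉ closure (Ub σ ℓ d) := by
      intro hxu
      refine hxF d hdf ⟨hxu, ?_⟩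
      intro hxW
      obtain ⟨e, he, hxe⟩ := mem_iUnion₂.mp hxW
      exact hnotin (hchA e he hxe)
    have hxW : 0 < m → x ∈ Wb σ ℓ d := by
      intro hm
      obtain ⟨p, hpf, hpc, hdp⟩ := KP_parent_exists hdf (by omega)
      have hxUp : x ∈ closure (Ub σ ℓ p) :=
        subset_closure ((KP_cB_child σ ℓ hc hpf hdp).1 hxd)
      have hnn : ¬ x ∉ ⋃ e ∈ Dch p, Wb σ ℓ e := fun hno => hxF p hpf ⟨hxUp, hno⟩
      obtain ⟨e0, he0, hxe0⟩ := mem_iUnion₂.mp (not_not.mp hnn)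
      by_cases heq : e0 = d
      · exact heq ▸ hxe0
      · exfalso
        have he0c : (ksupp e0).ncard = m := by rw [he0.2.1]; omega
        have hdisj := hc.2.2 m e0 d he0.1 he0c hdf hdm heq
        exact Set.disjoint_left.mp hdisj (subset_closure hxe0) hxd
    have hanc : ∀ jj : Fin m, ∃ a : Cant, (ksupp a).Finite ∧ (ksupp a).ncard = (jj:ℕ) ∧
        closure (Wb σ ℓ d) ⊆ closure (Wb σ ℓ a) ∧ ∃ e ∈ Dch a, Wb σ ℓ d ⊆ Wb σ ℓ e := by
      intro jj
      obtain ⟨a, h1, h2, h3, h4⟩ :=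
        KP_exists_anc σ ℓ hc m (jj:ℕ) (le_of_lt jj.2) d hdf hdm
      exact ⟨a, h1, h2, h3, h4 jj.2⟩
    choose A hAf hAc hAsub hAe using hanc
    choose E hEch hEsub using hAe
    have hTnotin : ∀ a : Cant, (ksupp a).Finite → x ∈ closure (Wb σ ℓ a) →
        x ∉ closure (⋃ d' ∈ {d' : Cant | (ksupp d').Finite ∧
          (ksupp d').ncard = (ksupp a).ncard ∧ d' ≠ a}, closure (Wb σ ℓ d')) := by
      intro a haf hxa hmem
      rcases KP_clos σ ℓ hc (ksupp a).ncard _ (fun d' hd' => ⟨hd'.1, hd'.2.1⟩) hmem with h | h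
      · obtain ⟨d', ⟨hd'f, hd'c, hd'ne⟩, hxd'⟩ := mem_iUnion₂.mp h
        have hdisj := hc.2.2 (ksupp a).ncard d' a hd'f hd'c haf rfl hd'ne
        exact Set.disjoint_left.mp hdisj hxd' hxa
      · exact hxK h
    refine ⟨(An σ ℓ (m+1))ᶜ ∩ (closure (Ub σ ℓ d))ᶜ ∩
        (closure (⋃ d' ∈ {d' : Cant | (ksupp d').Finite ∧
          (ksupp d').ncard = (ksupp d).ncard ∧ d' ≠ d}, closure (Wb σ ℓ d')))ᶜ ∩
        ⋂ jj : Fin m, ((closure (⋃ d' ∈ {d' : Cant | (ksupp d').Finite ∧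
          (ksupp d').ncard = (ksupp (A jj)).ncard ∧ d' ≠ A jj}, closure (Wb σ ℓ d')))ᶜ ∩
          Wb σ ℓ (E jj)), ?_, ?_, ?_⟩
    · -- the neighborhood misses `K⁺`
      intro y hy hmem
      obtain ⟨⟨⟨hy1, hy2⟩, hy3⟩, hy4⟩ := hy
      rcases hmem with hyK | hyF
      · exact hy1 (KP_K_subset_An σ ℓ (m+1) hyK)
      · obtain ⟨d', hd'f, hyFd⟩ := mem_iUnion₂.mp hyF
        rcases lt_trichotomy (ksupp d').ncard m with hlt | heq | hgt
        · set jj : Fin m := ⟨(ksupp d').ncard, hlt⟩ with hjj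
          by_cases hda : d' = A jj
          · have hyE := (mem_iInter.mp hy4 jj).2
            refine hyFd.2 (mem_iUnion₂.mpr ⟨E jj, ?_, hyE⟩)
            rw [hda]
            exact hEch jj
          · refine (mem_iInter.mp hy4 jj).1 (subset_closure (mem_iUnion₂.mpr
              ⟨d', ⟨hd'f, ?_, hda⟩, hFsub d' hyFd⟩))
            rw [hAc jj]
        · by_cases hdd : d' = d
          · exact hy2 (by rw [← hdd]; exact hyFd.1)
          · refine hy3 (subset_closure (mem_iUnion₂.mpr
              ⟨d', ⟨hd'f, ?_, hdd⟩, hFsub d' hyFd⟩))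
            rw [hdm, heq]
        · exact hy1 (KP_cB_subset_An_le σ ℓ hc hd'f (by omega) (hFsub d' hyFd))
    · -- openness
      refine IsOpen.inter (IsOpen.inter (IsOpen.inter ?_ ?_) ?_) ?_
      · exact (KP_An_closed σ ℓ (m+1)).isOpen_compl
      · exact isClosed_closure.isOpen_compl
      · exact isClosed_closure.isOpen_compl
      · exact isOpen_iInter_of_finite fun jj =>
          (isClosed_closure.isOpen_compl).inter (KP_Wb_open σ ℓ (E jj))
    · -- membership of `x`
      refine ⟨⟨⟨hnotin, hxU⟩, hTnotin d hdf hxd⟩, mem_iInter.2 fun jj => ⟨?_, ?_⟩⟩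
      · exact hTnotin (A jj) (hAf jj) (hAsub jj hxd)
      · exact hEsub jj (hxW (lt_of_le_of_lt (Nat.zero_le _) jj.2))
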